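/- Let A be an n×n skew-symmetric matrix with |aᵢₖ| ≤ 1, 0 < ε ≤ 1, 0 < σ < 1, and let the Grigoriadis–Khachiyan process run for T = ⌈3(ln n + ln(1/σ))/ε²⌉ steps, producing x = X(T)/T where X(T) counts how many times each index was sampled. Then with probability at least 1 − σ, every coordinate of A x(T) is at most ε, i.e. Ax ≤ ε·e componentwise. -/

import Mathlib

/-- `gkU A t f` is the vector `U(t) = A X(t)` of the Grigoriadis–Khachiyan process,
where `f : Fin t → Fin n` is the history of sampled indices: `U(0) = 0`,
`U(t+1) = U(t) + A e_{k(t)}`. -/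
noncomputable def gkU {n : ℕ} (A : Matrix (Fin n) (Fin n) ℝ) :
    ∀ t : ℕ, (Fin t → Fin n) → Fin n → ℝ
  | 0, _, _ => 0
  | (t + 1), f, i => gkU A t (Fin.init f) i + A i (f (Fin.last t))

/-- The exponential potential `Φ(t) = ∑ᵢ exp(ε Uᵢ(t)/2)`. -/
noncomputable def gkPhi {n : ℕ} (A : Matrix (Fin n) (Fin n) ℝ) (ε : ℝ)
    (t : ℕ) (f : Fin t → Fin n) : ℝ :=
  ∑ i, Real.exp (ε * gkU A t f i / 2)

/-- The sampling probabilities `pᵢ(t) = exp(ε Uᵢ(t)/2)/Φ(t)`. -/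
noncomputable def gkP {n : ℕ} (A : Matrix (Fin n) (Fin n) ℝ) (ε : ℝ)
    (t : ℕ) (f : Fin t → Fin n) (i : Fin n) : ℝ :=
  Real.exp (ε * gkU A t f i / 2) / gkPhi A ε t f

/-- The probability of observing the history `f` of sampled indices. -/
noncomputable def gkProb {n : ℕ} (A : Matrix (Fin n) (Fin n) ℝ) (ε : ℝ) :
    ∀ t : ℕ, (Fin t → Fin n) → ℝ
  | 0, _ => 1
  | (t + 1), f => gkProb A ε t (Fin.init f) * gkP A ε t (Fin.init f) (f (Fin.last t))

/-- `X(T)ᵢ` = number of steps at which index `i` was sampled, so that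
`x = X(T)/T` is the output of the algorithm. -/
def gkX {n : ℕ} (T : ℕ) (f : Fin T → Fin n) (i : Fin n) : ℕ :=
  (Finset.univ.filter (fun s => f s = i)).card

lemma gk_exp_quad {x : ℝ} (hx : |x| ≤ 1/2) : Real.exp x ≤ 1 + x + (2/3) * x^2 := by
  have h1 : |x| ≤ 1 := hx.trans (by norm_num)
  have h := Real.exp_bound h1 (n := 3) (by norm_num)
  have hr : ∑ m ∈ Finset.range 3, x ^ m / m.factorial = 1 + x + x^2/2 := by
    simp [Finset.sum_range_succ, Nat.factorial]
  rw [hr] at h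
  norm_num [Nat.factorial] at h
  have h2 := (abs_sub_le_iff.1 h).1
  have h3 : |x|^3 ≤ (1/2) * x^2 := by
    have e : |x|^3 = |x| * x^2 := by rw [pow_succ, sq_abs, pow_two]; ring
    rw [e]; nlinarith [abs_nonneg x, sq_nonneg x]
  nlinarith [h2, h3]

section GK
variable {n : ℕ} (A : Matrix (Fin n) (Fin n) ℝ) (ε : ℝ)

lemma gkPhi_pos (hn : 0 < n) (t : ℕ) (f : Fin t → Fin n) : 0 < gkPhi A ε t f :=
  Finset.sum_pos (fun _ _ => Real.exp_pos _) ⟨⟨0, hn⟩, Finset.mem_univ _⟩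

lemma gkP_nonneg (hn : 0 < n) (t : ℕ) (f : Fin t → Fin n) (k : Fin n) : 0 ≤ gkP A ε t f k :=
  div_nonneg (Real.exp_pos _).le (gkPhi_pos A ε hn t f).le

lemma sum_gkP (hn : 0 < n) (t : ℕ) (f : Fin t → Fin n) : ∑ k, gkP A ε t f k = 1 := by
  unfold gkP
  rw [← Finset.sum_div]
  exact div_self (gkPhi_pos A ε hn t f).ne'

def gkSnocEquiv (n t : ℕ) : ((Fin t → Fin n) × Fin n) ≃ (Fin (t+1) → Fin n) where
  toFun p := Fin.snoc p.1 p.2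
  invFun f := (Fin.init f, f (Fin.last t))
  left_inv p := by simp
  right_inv f := by simp

lemma gk_sum_snoc {t : ℕ} (g : (Fin (t+1) → Fin n) → ℝ) :
    ∑ f : Fin (t+1) → Fin n, g f
      = ∑ f : Fin t → Fin n, ∑ k, g (Fin.snoc f k) := by
  rw [← Equiv.sum_comp (gkSnocEquiv n t) g, Fintype.sum_prod_type]
  rfl

lemma gkU_snoc (t : ℕ) (f : Fin t → Fin n) (k : Fin n) (i : Fin n) :
    gkU A (t+1) (Fin.snoc f k) i = gkU A t f i + A i k := by
  simp [gkU]

lemma gkProb_snoc (t : ℕ) (f : Fin t → Fin n) (k : Fin n) :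
    gkProb A ε (t+1) (Fin.snoc f k) = gkProb A ε t f * gkP A ε t f k := by
  simp [gkProb]

lemma gkProb_nonneg (hn : 0 < n) : ∀ (t : ℕ) (f : Fin t → Fin n), 0 ≤ gkProb A ε t f
  | 0, _ => by simp [gkProb]
  | (t+1), f => mul_nonneg (gkProb_nonneg hn t _) (gkP_nonneg A ε hn t _ _)

lemma sum_gkProb (hn : 0 < n) : ∀ t : ℕ, ∑ f : Fin t → Fin n, gkProb A ε t f = 1
  | 0 => by simp [gkProb]
  | (t+1) => by
    rw [gk_sum_snoc]
    simp only [gkProb_snoc, ← Finset.mul_sum, sum_gkP A ε hn t, mul_one]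
    exact sum_gkProb hn t

lemma gk_step (hn : 0 < n) (hskew : A.transpose = -A) (hbdd : ∀ i k, |A i k| ≤ 1)
    (hε0 : 0 < ε) (hε1 : ε ≤ 1) (t : ℕ) (f : Fin t → Fin n) :
    ∑ k, gkP A ε t f k * gkPhi A ε (t+1) (Fin.snoc f k)
      ≤ (1 + ε^2/6) * gkPhi A ε t f := by
  set g : Fin n → ℝ := fun i => Real.exp (ε * gkU A t f i / 2) with hg
  set Φ : ℝ := gkPhi A ε t f with hΦ
  have hΦeq : Φ = ∑ i, g i := rfl
  have hgpos : ∀ i, 0 < g i := fun i => Real.exp_pos _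
  have hΦpos : 0 < Φ := gkPhi_pos A ε hn t f
  have hA : ∀ i k, A i k = - A k i := by
    intro i k
    have := congrFun (congrFun hskew k) i
    simpa [Matrix.transpose_apply] using this
  have hswap : (∑ k, ∑ i, g k * g i * A k i) = ∑ k, ∑ i, g k * g i * A i k := by
    rw [Finset.sum_comm]
    exact Finset.sum_congr rfl fun k _ => Finset.sum_congr rfl fun i _ => by ring
  have hzero : (∑ k, ∑ i, g k * g i * A i k) = 0 := by
    have h1 : (∑ k, ∑ i, g k * g i * A i k) = -∑ k, ∑ i, g k * g i * A k i := by
      rw [← Finset.sum_neg_distrib]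
      refine Finset.sum_congr rfl fun k _ => ?_
      rw [← Finset.sum_neg_distrib]
      exact Finset.sum_congr rfl fun i _ => by rw [hA i k]; ring
    rw [hswap] at h1
    linarith
  have hL : ∀ k, gkP A ε t f k * gkPhi A ε (t+1) (Fin.snoc f k)
      = ∑ i, g k / Φ * (g i * Real.exp (ε * A i k / 2)) := by
    intro k
    have hphi1 : gkPhi A ε (t+1) (Fin.snoc f k) = ∑ i, g i * Real.exp (ε * A i k / 2) := by
      rw [gkPhi]
      refine Finset.sum_congr rfl fun i _ => ?_
      rw [gkU_snoc]
      simp only [hg]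
      rw [← Real.exp_add]
      congr 1
      ring
    rw [hphi1, Finset.mul_sum]
    rfl
  rw [Finset.sum_congr rfl fun k _ => hL k]
  have e1 : ∑ k, ∑ i, g k / Φ * g i = Φ := by
    rw [← Finset.sum_mul_sum, ← Finset.sum_div, ← hΦeq, div_self hΦpos.ne', one_mul, hΦeq]
  have e2 : ∑ k, ∑ i, g k / Φ * (g i * (ε * A i k / 2)) = 0 := by
    have key : ∀ k i, g k / Φ * (g i * (ε * A i k / 2)) = (ε / (2 * Φ)) * (g k * g i * A i k) := by
      intro k i; field_simp
    simp only [key, ← Finset.mul_sum]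
    rw [hzero, mul_zero]
  have e3 : ∑ k, ∑ i, g k / Φ * (g i * (ε^2 * (A i k)^2 / 6)) ≤ ε^2/6 * Φ := by
    calc ∑ k, ∑ i, g k / Φ * (g i * (ε^2 * (A i k)^2 / 6))
        ≤ ∑ k, ∑ i, g k / Φ * (g i * (ε^2 * 1 / 6)) := by
          refine Finset.sum_le_sum fun k _ => Finset.sum_le_sum fun i _ => ?_
          have hak : (A i k)^2 ≤ 1 := by
            have := hbdd i k
            nlinarith [abs_nonneg (A i k), sq_abs (A i k)]
          have hpg : (0:ℝ) ≤ g k / Φ := div_nonneg (hgpos k).le hΦpos.le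
          have h6 : ε^2 * (A i k)^2 / 6 ≤ ε^2 * 1 / 6 := by
            nlinarith [mul_le_mul_of_nonneg_left hak (sq_nonneg ε)]
          exact mul_le_mul_of_nonneg_left
            (mul_le_mul_of_nonneg_left h6 (hgpos i).le) hpg
      _ = ε^2/6 * ∑ k, ∑ i, g k / Φ * g i := by
          rw [Finset.mul_sum]
          refine Finset.sum_congr rfl fun k _ => ?_
          rw [Finset.mul_sum]
          exact Finset.sum_congr rfl fun i _ => by ring
      _ = ε^2/6 * Φ := by rw [e1]
  calc ∑ k, ∑ i, g k / Φ * (g i * Real.exp (ε * A i k / 2))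
      ≤ ∑ k, ∑ i, (g k / Φ * g i + g k / Φ * (g i * (ε * A i k / 2))
          + g k / Φ * (g i * (ε^2 * (A i k)^2 / 6))) := by
        refine Finset.sum_le_sum fun k _ => Finset.sum_le_sum fun i _ => ?_
        have hx : |ε * A i k / 2| ≤ 1/2 := by
          rw [abs_div, abs_mul, abs_of_pos hε0, abs_two]
          have := hbdd i k
          nlinarith [abs_nonneg (A i k)]
        have hq : Real.exp (ε * A i k / 2) ≤ 1 + ε * A i k / 2 + ε^2 * (A i k)^2 / 6 := by
          calc Real.exp (ε * A i k / 2)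
              ≤ 1 + ε * A i k / 2 + (2/3) * (ε * A i k / 2)^2 := gk_exp_quad hx
            _ = 1 + ε * A i k / 2 + ε^2 * (A i k)^2 / 6 := by ring
        have hpg : (0:ℝ) ≤ g k / Φ * g i :=
          mul_nonneg (div_nonneg (hgpos k).le hΦpos.le) (hgpos i).le
        nlinarith [hq, hpg]
    _ = (∑ k, ∑ i, g k / Φ * g i) + (∑ k, ∑ i, g k / Φ * (g i * (ε * A i k / 2)))
        + (∑ k, ∑ i, g k / Φ * (g i * (ε^2 * (A i k)^2 / 6))) := by
        simp [Finset.sum_add_distrib]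
    _ ≤ Φ + 0 + ε^2/6 * Φ := by rw [e1, e2]; linarith [e3]
    _ = (1 + ε^2/6) * Φ := by ring

lemma gk_potential (hn : 0 < n) (hskew : A.transpose = -A) (hbdd : ∀ i k, |A i k| ≤ 1)
    (hε0 : 0 < ε) (hε1 : ε ≤ 1) (t : ℕ) :
    ∑ f : Fin t → Fin n, gkProb A ε t f * gkPhi A ε t f ≤ n * (1 + ε^2/6)^t := by
  induction t with
  | zero =>
    simp [gkProb, gkPhi, gkU]
  | succ t ih =>
    rw [gk_sum_snoc]
    have hstep : ∀ f : Fin t → Fin n,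
        ∑ k, gkProb A ε (t+1) (Fin.snoc f k) * gkPhi A ε (t+1) (Fin.snoc f k)
          ≤ gkProb A ε t f * ((1 + ε^2/6) * gkPhi A ε t f) := by
      intro f
      simp only [gkProb_snoc]
      calc ∑ k, gkProb A ε t f * gkP A ε t f k * gkPhi A ε (t+1) (Fin.snoc f k)
          = gkProb A ε t f * ∑ k, gkP A ε t f k * gkPhi A ε (t+1) (Fin.snoc f k) := by
            rw [Finset.mul_sum]
            exact Finset.sum_congr rfl fun k _ => by ring
        _ ≤ gkProb A ε t f * ((1 + ε^2/6) * gkPhi A ε t f) :=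
            mul_le_mul_of_nonneg_left (gk_step A ε hn hskew hbdd hε0 hε1 t f)
              (gkProb_nonneg A ε hn t f)
    calc ∑ f : Fin t → Fin n, ∑ k, gkProb A ε (t+1) (Fin.snoc f k) * gkPhi A ε (t+1) (Fin.snoc f k)
        ≤ ∑ f : Fin t → Fin n, gkProb A ε t f * ((1 + ε^2/6) * gkPhi A ε t f) :=
          Finset.sum_le_sum fun f _ => hstep f
      _ = (1 + ε^2/6) * ∑ f : Fin t → Fin n, gkProb A ε t f * gkPhi A ε t f := by
          rw [Finset.mul_sum]
          exact Finset.sum_congr rfl fun f _ => by ring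
      _ ≤ (1 + ε^2/6) * (n * (1 + ε^2/6)^t) :=
          mul_le_mul_of_nonneg_left ih (by positivity)
      _ = n * (1 + ε^2/6)^(t+1) := by ring

lemma gkU_eq_sum : ∀ (t : ℕ) (f : Fin t → Fin n) (i : Fin n),
    gkU A t f i = ∑ s, A i (f s)
  | 0, f, i => by simp [gkU]
  | (t+1), f, i => by
    rw [gkU, gkU_eq_sum t, Fin.sum_univ_castSucc]
    simp [Fin.init]

lemma gkU_eq_X (T : ℕ) (f : Fin T → Fin n) (i : Fin n) :
    gkU A T f i = ∑ k, (gkX T f k : ℝ) * A i k := by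
  rw [gkU_eq_sum, ← Finset.sum_fiberwise Finset.univ f (fun s => A i (f s))]
  refine Finset.sum_congr rfl fun k _ => ?_
  have h1 : ∑ s ∈ Finset.univ.filter (fun s => f s = k), A i (f s)
      = ∑ _s ∈ Finset.univ.filter (fun s => f s = k), A i k :=
    Finset.sum_congr rfl fun s hs => by rw [(Finset.mem_filter.mp hs).2]
  rw [h1, Finset.sum_const, gkX, nsmul_eq_mul]

end GK

theorem grigoriadis_khachiyan (n : ℕ) (hn : 1 ≤ n)
    (A : Matrix (Fin n) (Fin n) ℝ)
    (hskew : A.transpose = -A) (hbdd : ∀ i k, |A i k| ≤ 1)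
    (ε σ : ℝ) (hε0 : 0 < ε) (hε1 : ε ≤ 1) (hσ0 : 0 < σ) (hσ1 : σ < 1)
    (T : ℕ) (hT : T = ⌈3 * (Real.log n + Real.log (1 / σ)) / ε ^ 2⌉₊) :
    1 - σ ≤
      ∑ f ∈ Finset.univ.filter
          (fun f : Fin T → Fin n =>
            ∀ i, Matrix.mulVec A (fun k => (gkX T f k : ℝ) / T) i ≤ ε),
        gkProb A ε T f := by
  have hn0 : 0 < n := hn
  have hn1 : (1:ℝ) ≤ (n:ℝ) := by exact_mod_cast hn
  have hlogn : 0 ≤ Real.log n := Real.log_nonneg hn1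
  have hlogσ : 0 < Real.log (1/σ) := Real.log_pos (by rw [lt_div_iff₀ hσ0]; linarith)
  have hTpos : 0 < T := by
    rw [hT, Nat.ceil_pos]
    apply div_pos (by nlinarith) (by positivity)
  have hTR : (0:ℝ) < (T:ℝ) := by exact_mod_cast hTpos
  have hTreal : 3 * (Real.log n + Real.log (1/σ)) / ε^2 ≤ (T:ℝ) := by
    rw [hT]; exact Nat.le_ceil _
  set P : (Fin T → Fin n) → Prop :=
    fun f => ∀ i, Matrix.mulVec A (fun k => (gkX T f k : ℝ) / T) i ≤ ε with hP
  have hsplit := Finset.sum_filter_add_sum_filter_not Finset.univ P (gkProb A ε T)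
  have htot : ∑ f : Fin T → Fin n, gkProb A ε T f = 1 := sum_gkProb A ε hn0 T
  have hM : ∀ f ∈ Finset.univ.filter (fun f : Fin T → Fin n => ¬ P f),
      Real.exp ((T:ℝ) * ε^2 / 2) ≤ gkPhi A ε T f := by
    intro f hf
    have hbadf := (Finset.mem_filter.mp hf).2
    simp only [hP, not_forall, not_le] at hbadf
    obtain ⟨i, hi⟩ := hbadf
    have hmv : Matrix.mulVec A (fun k => (gkX T f k : ℝ)/T) i = gkU A T f i / T := by
      rw [gkU_eq_X, Finset.sum_div]
      simp only [Matrix.mulVec, dotProduct]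
      exact Finset.sum_congr rfl fun k _ => by ring
    rw [hmv, lt_div_iff₀ hTR] at hi
    calc Real.exp ((T:ℝ) * ε^2 / 2) ≤ Real.exp (ε * gkU A T f i / 2) := by
          apply Real.exp_le_exp.mpr
          nlinarith [mul_le_mul_of_nonneg_left hi.le hε0.le]
      _ ≤ gkPhi A ε T f :=
          Finset.single_le_sum (f := fun j => Real.exp (ε * gkU A T f j / 2))
            (fun j _ => (Real.exp_pos _).le) (Finset.mem_univ i)
  have hbad : ∑ f ∈ Finset.univ.filter (fun f : Fin T → Fin n => ¬ P f),
      gkProb A ε T f ≤ σ := by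
    have hexp2pos : (0:ℝ) < Real.exp ((T:ℝ)*ε^2/2) := Real.exp_pos _
    have h1 : (∑ f ∈ Finset.univ.filter (fun f : Fin T → Fin n => ¬ P f), gkProb A ε T f)
        * Real.exp ((T:ℝ)*ε^2/2)
        ≤ ∑ f : Fin T → Fin n, gkProb A ε T f * gkPhi A ε T f := by
      rw [Finset.sum_mul]
      calc ∑ f ∈ Finset.univ.filter (fun f : Fin T → Fin n => ¬ P f),
            gkProb A ε T f * Real.exp ((T:ℝ)*ε^2/2)
          ≤ ∑ f ∈ Finset.univ.filter (fun f : Fin T → Fin n => ¬ P f),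
            gkProb A ε T f * gkPhi A ε T f :=
            Finset.sum_le_sum fun f hf =>
              mul_le_mul_of_nonneg_left (hM f hf) (gkProb_nonneg A ε hn0 T f)
        _ ≤ ∑ f : Fin T → Fin n, gkProb A ε T f * gkPhi A ε T f :=
            Finset.sum_le_sum_of_subset_of_nonneg (Finset.filter_subset _ _)
              (fun f _ _ => mul_nonneg (gkProb_nonneg A ε hn0 T f) (gkPhi_pos A ε hn0 T f).le)
    have h2 := gk_potential A ε hn0 hskew hbdd hε0 hε1 T
    have h4 : ((1:ℝ)+ε^2/6)^T ≤ Real.exp ((T:ℝ)*(ε^2/6)) := by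
      calc ((1:ℝ)+ε^2/6)^T ≤ (Real.exp (ε^2/6))^T :=
            pow_le_pow_left₀ (by positivity) (by linarith [Real.add_one_le_exp (ε^2/6)]) T
        _ = Real.exp ((T:ℝ)*(ε^2/6)) := (Real.exp_nat_mul _ T).symm
    have h4' : (n:ℝ) * ((1:ℝ)+ε^2/6)^T ≤ (n:ℝ) * Real.exp ((T:ℝ)*(ε^2/6)) :=
      mul_le_mul_of_nonneg_left h4 (by positivity)
    have hT3 : Real.log n + Real.log (1/σ) ≤ (T:ℝ)*ε^2/3 := by
      have hε2 : (0:ℝ) < ε^2 := by positivity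
      rw [div_le_iff₀ hε2] at hTreal
      linarith
    have hns : (n:ℝ)/σ ≤ Real.exp ((T:ℝ)*ε^2/3) := by
      have heq : (n:ℝ)/σ = Real.exp (Real.log n + Real.log (1/σ)) := by
        rw [Real.exp_add, Real.exp_log (by positivity), Real.exp_log (by positivity)]
        field_simp
      rw [heq]
      exact Real.exp_le_exp.mpr hT3
    have h6 : (n:ℝ) ≤ σ * Real.exp ((T:ℝ)*ε^2/3) := by
      rw [div_le_iff₀ hσ0] at hns
      linarith
    have h5 : (n:ℝ) * Real.exp ((T:ℝ)*(ε^2/6)) ≤ σ * Real.exp ((T:ℝ)*ε^2/2) := by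
      calc (n:ℝ) * Real.exp ((T:ℝ)*(ε^2/6))
          ≤ (σ * Real.exp ((T:ℝ)*ε^2/3)) * Real.exp ((T:ℝ)*(ε^2/6)) :=
            mul_le_mul_of_nonneg_right h6 (Real.exp_pos _).le
        _ = σ * Real.exp ((T:ℝ)*ε^2/2) := by
            rw [mul_assoc, ← Real.exp_add]
            congr 2
            ring
    have hfinal : (∑ f ∈ Finset.univ.filter (fun f : Fin T → Fin n => ¬ P f), gkProb A ε T f)
        * Real.exp ((T:ℝ)*ε^2/2) ≤ σ * Real.exp ((T:ℝ)*ε^2/2) :=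
      h1.trans (h2.trans (h4'.trans h5))
    exact le_of_mul_le_mul_right hfinal hexp2pos
  linarith [hsplit, htot, hbad,
    Finset.sum_le_sum_of_subset_of_nonneg (Finset.filter_subset P Finset.univ)
      (fun f _ _ => gkProb_nonneg A ε hn0 T f)]
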